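/- Define y_{2k-1} = x^{2k-1} − (2k−1)x and y_{2k} = x^{2k} − k x² for k ≥ 2. Then each of the operators T₃(y) = (x²−1)y'' − 2x y', T₂(y) = x y'' − 2(1 + 2/(x²−1)) y', T₁(y) = y'' + x(1 − 4/(x²−1)) y' maps the span of {1, y₃, y₄, ..., y_n} into itself for every n ≥ 3. -/

import Mathlib

open Polynomial

/-- The second-order operator `T(y) = p y'' + q y' + r y` with rational coefficients,
applied to a polynomial `y`. -/
noncomputable def TR (p q r : RatFunc ℝ) (y : Polynomial ℝ) : RatFunc ℝ :=
  p * algebraMap (Polynomial ℝ) (RatFunc ℝ) (derivative (derivative y)) +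
  q * algebraMap (Polynomial ℝ) (RatFunc ℝ) (derivative y) +
  r * algebraMap (Polynomial ℝ) (RatFunc ℝ) y

/-- `y_{2k-1} = x^{2k-1} − (2k−1)x` and `y_{2k} = x^{2k} − k x²`. -/
noncomputable def yGKM (j : ℕ) : Polynomial ℝ :=
  if Odd j then X ^ j - C (j : ℝ) * X else X ^ j - C ((j : ℝ) / 2) * X ^ 2

/-- `span{1, y₃, y₄, …, y_n}`. -/
noncomputable def SGKM (n : ℕ) : Submodule ℝ (Polynomial ℝ) :=
  Submodule.span ℝ ({1} ∪ yGKM '' {j | 3 ≤ j ∧ j ≤ n})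

/-- The submodule of polynomials with degree ≤ n whose derivative vanishes at ±1. -/
noncomputable def GKMcond (n : ℕ) : Submodule ℝ (Polynomial ℝ) where
  carrier := {p | p.natDegree ≤ n ∧ (derivative p).eval 1 = 0 ∧ (derivative p).eval (-1) = 0}
  add_mem' := by
    rintro a b ⟨ha1, ha2, ha3⟩ ⟨hb1, hb2, hb3⟩
    refine ⟨(natDegree_add_le a b).trans (by omega), ?_, ?_⟩ <;>
      simp [derivative_add, ha2, ha3, hb2, hb3]
  zero_mem' := by simp
  smul_mem' := by
    rintro c a ⟨ha1, ha2, ha3⟩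
    refine ⟨(natDegree_smul_le c a).trans ha1, ?_, ?_⟩ <;>
      simp [derivative_smul, ha2, ha3]

lemma yGKM_mem_cond {n j : ℕ} (h3 : 3 ≤ j) (hjn : j ≤ n) : yGKM j ∈ GKMcond n := by
  unfold yGKM
  rcases Nat.even_or_odd j with hj | hj
  · rw [if_neg (Nat.not_odd_iff_even.mpr hj)]
    refine ⟨(natDegree_sub_le _ _).trans ?_, ?_, ?_⟩
    · simp only [natDegree_X_pow]
      refine max_le hjn ((natDegree_C_mul_le _ _).trans ?_)
      simp [natDegree_X_pow]; omega
    · simp [derivative_X_pow]; ring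
    · have : (-1 : ℝ) ^ (j - 1) = -1 := by
        have : Odd (j - 1) := Nat.Even.sub_odd (by omega) hj (by norm_num)
        exact this.neg_one_pow
      simp [derivative_X_pow, this]; ring
  · rw [if_pos hj]
    refine ⟨(natDegree_sub_le _ _).trans ?_, ?_, ?_⟩
    · simp only [natDegree_X_pow]
      refine max_le hjn ((natDegree_C_mul_le _ _).trans ?_)
      simp [natDegree_X]; omega
    · simp [derivative_X_pow]
    · have : (-1 : ℝ) ^ (j - 1) = 1 := by
        have : Even (j - 1) := Nat.Odd.sub_odd hj (by norm_num)
        exact this.neg_one_pow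
      simp [derivative_X_pow, this]

lemma SGKM_le_cond (n : ℕ) : SGKM n ≤ GKMcond n := by
  rw [SGKM, Submodule.span_le]
  rintro p (rfl | ⟨j, ⟨h3, hjn⟩, rfl⟩)
  · exact ⟨by simp, by simp, by simp⟩
  · exact yGKM_mem_cond h3 hjn

lemma one_mem_SGKM (n : ℕ) : (1 : Polynomial ℝ) ∈ SGKM n :=
  Submodule.subset_span (Or.inl rfl)

lemma C_mem_SGKM (n : ℕ) (a : ℝ) : (C a : Polynomial ℝ) ∈ SGKM n := by
  have : (C a : Polynomial ℝ) = a • 1 := by simp [smul_eq_C_mul]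
  rw [this]
  exact Submodule.smul_mem _ _ (one_mem_SGKM n)

lemma yGKM_coeff_top {j : ℕ} (h3 : 3 ≤ j) : (yGKM j).coeff j = 1 := by
  unfold yGKM
  split <;> simp [coeff_X, coeff_X_pow] <;> omega

lemma cond_le_SGKM {n : ℕ} (hn : 3 ≤ n) : GKMcond n ≤ SGKM n := by
  suffices H : ∀ d : ℕ, ∀ p : Polynomial ℝ, p.natDegree ≤ d → p ∈ GKMcond n → p ∈ SGKM n by
    intro p hp; exact H p.natDegree p le_rfl hp
  intro d
  induction d with
  | zero =>
    intro p hp _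
    rw [eq_C_of_natDegree_le_zero hp]
    exact C_mem_SGKM n _
  | succ d ih =>
    intro p hpd hp
    obtain ⟨hdeg, h1, h2⟩ := hp
    by_cases hle : p.natDegree ≤ d
    · exact ih p hle ⟨hdeg, h1, h2⟩
    have hpdeq : p.natDegree = d + 1 := by omega
    by_cases hd2 : d + 1 ≤ 2
    -- low degree case: show coeff 1 and 2 vanish, so p is constant
    · have hc1 : p.coeff 1 = 0 ∧ p.coeff 2 = 0 := by
        have hd1 : (derivative p).natDegree ≤ 1 := by
          have := natDegree_derivative_le p
          omega
        have hrep := eq_X_add_C_of_natDegree_le_one hd1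
        rw [hrep] at h1 h2
        simp [coeff_derivative] at h1 h2
        constructor <;> nlinarith [h1, h2]
      exfalso
      have hp0 : p ≠ 0 := fun h0 => by rw [h0, natDegree_zero] at hpdeq; omega
      have := coeff_ne_zero_of_eq_degree (degree_eq_natDegree hp0)
      rw [hpdeq] at this
      have hdle : d ≤ 1 := by omega
      interval_cases d <;> simp_all
    -- main case: subtract leading coefficient times yGKM
    · push_neg at hd2
      have h3d : 3 ≤ d + 1 := by omega
      set q : Polynomial ℝ := p - C (p.coeff (d+1)) * yGKM (d+1) with hq
      have hy : yGKM (d+1) ∈ GKMcond n := yGKM_mem_cond h3d (by omega)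
      have hymem : yGKM (d+1) ∈ SGKM n :=
        Submodule.subset_span (Or.inr ⟨d+1, ⟨h3d, by omega⟩, rfl⟩)
      have hqc : q ∈ GKMcond n := by
        have : (C (p.coeff (d+1)) * yGKM (d+1) : Polynomial ℝ) ∈ GKMcond n := by
          have := (GKMcond n).smul_mem (p.coeff (d+1)) hy
          simpa [smul_eq_C_mul] using this
        exact (GKMcond n).sub_mem ⟨hdeg, h1, h2⟩ this
      have hqd : q.natDegree ≤ d := by
        by_cases hq0 : q = 0
        · simp [hq0]
        have hqle : q.natDegree ≤ d + 1 := by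
          refine (natDegree_sub_le _ _).trans (max_le (by omega) ?_)
          exact (natDegree_C_mul_le _ _).trans (yGKM_mem_cond h3d (le_refl (d+1))).1
        have hqcoeff : q.coeff (d+1) = 0 := by
          simp [hq, yGKM_coeff_top h3d]
        rcases Nat.lt_or_ge q.natDegree (d+1) with h | h
        · omega
        · exfalso
          have : q.natDegree = d + 1 := by omega
          exact hq0 (leadingCoeff_eq_zero.mp (by rwa [leadingCoeff, this]))
      have hqmem : q ∈ SGKM n := ih q hqd hqc
      have : p = q + C (p.coeff (d+1)) * yGKM (d+1) := by ring
      rw [this]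
      refine (SGKM n).add_mem hqmem ?_
      have := (SGKM n).smul_mem (p.coeff (d+1)) hymem
      simpa [smul_eq_C_mul] using this

lemma mem_SGKM_iff {n : ℕ} (hn : 3 ≤ n) {p : Polynomial ℝ} :
    p ∈ SGKM n ↔ p.natDegree ≤ n ∧ (derivative p).eval 1 = 0 ∧ (derivative p).eval (-1) = 0 :=
  ⟨fun h => SGKM_le_cond n h, fun h => cond_le_SGKM hn h⟩

lemma sq_sub_one_dvd {p : Polynomial ℝ} (h1 : p.eval 1 = 0) (h2 : p.eval (-1) = 0) :
    ∃ g : Polynomial ℝ, p = (X ^ 2 - 1) * g := by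
  have d1 : (X - C (1:ℝ)) ∣ p := dvd_iff_isRoot.mpr h1
  have d2 : (X - C (-1:ℝ)) ∣ p := dvd_iff_isRoot.mpr h2
  have hco : IsCoprime (X - C (1:ℝ)) (X - C (-1:ℝ)) :=
    isCoprime_X_sub_C_of_isUnit_sub (by norm_num)
  obtain ⟨g, hgg⟩ := hco.mul_dvd d1 d2
  refine ⟨g, by rw [hgg]; simp only [map_neg, map_one]; ring⟩

lemma X_sq_sub_one_ne : (X ^ 2 - 1 : Polynomial ℝ) ≠ 0 := fun h => by
  simpa using congrArg (eval 0) h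

lemma X_sq_sub_one_natDegree : (X ^ 2 - 1 : Polynomial ℝ).natDegree = 2 := by
  have := natDegree_X_pow_sub_C (n := 2) (r := (1:ℝ))
  simpa using this

theorem stmt11 : ∀ n : ℕ, 3 ≤ n → ∀ f ∈ SGKM n,
    ((X ^ 2 - 1) * derivative (derivative f) - 2 * X * derivative f ∈ SGKM n) ∧
    (∃ z ∈ SGKM n,
      TR (algebraMap (Polynomial ℝ) (RatFunc ℝ) X)
        (-2 * (1 + 2 / (RatFunc.X ^ 2 - 1))) 0 f =
          algebraMap (Polynomial ℝ) (RatFunc ℝ) z) ∧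
    (∃ z ∈ SGKM n,
      TR 1 (RatFunc.X * (1 - 4 / (RatFunc.X ^ 2 - 1))) 0 f =
        algebraMap (Polynomial ℝ) (RatFunc ℝ) z) := by
  intro n hn f hf
  rw [mem_SGKM_iff hn] at hf
  obtain ⟨hdeg, h1, h2⟩ := hf
  obtain ⟨g, hg⟩ := sq_sub_one_dvd h1 h2
  have hddle := natDegree_derivative_le f
  have hgdeg : g.natDegree + 3 ≤ n ∨ g = 0 := by
    by_cases hg0 : g = 0
    · exact Or.inr hg0
    · left
      have hmul : (derivative f).natDegree = 2 + g.natDegree := by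
        rw [hg, natDegree_mul X_sq_sub_one_ne hg0, X_sq_sub_one_natDegree]
      omega
  have hX2 : (RatFunc.X ^ 2 - 1 : RatFunc ℝ)
      = algebraMap (Polynomial ℝ) (RatFunc ℝ) (X ^ 2 - 1) := by
    rw [map_sub, map_pow, RatFunc.algebraMap_X, map_one]
  have hDne : (RatFunc.X ^ 2 - 1 : RatFunc ℝ) ≠ 0 :=
    hX2 ▸ RatFunc.algebraMap_ne_zero X_sq_sub_one_ne
  refine ⟨?_, ?_, ?_⟩
  -- T₃
  · rw [mem_SGKM_iff hn]
    refine ⟨?_, ?_, ?_⟩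
    · have hd2 := natDegree_derivative_le (derivative f)
      refine (natDegree_sub_le _ _).trans (max_le ?_ ?_)
      · exact natDegree_mul_le.trans (by rw [X_sq_sub_one_natDegree]; omega)
      · refine natDegree_mul_le.trans ?_
        have h2X : ((2 : Polynomial ℝ) * X).natDegree ≤ 1 :=
          natDegree_mul_le.trans (by simp)
        omega
    · have hw : derivative ((X ^ 2 - 1) * derivative (derivative f) - 2 * X * derivative f)
          = (X ^ 2 - 1) * derivative (derivative (derivative f)) - 2 * derivative f := by
        simp only [derivative_sub, derivative_mul, derivative_X_pow, derivative_one,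
          derivative_ofNat, derivative_X, map_ofNat, Nat.cast_ofNat]
        ring
      rw [hw]
      simp [h1]
    · have hw : derivative ((X ^ 2 - 1) * derivative (derivative f) - 2 * X * derivative f)
          = (X ^ 2 - 1) * derivative (derivative (derivative f)) - 2 * derivative f := by
        simp only [derivative_sub, derivative_mul, derivative_X_pow, derivative_one,
          derivative_ofNat, derivative_X, map_ofNat, Nat.cast_ofNat]
        ring
      rw [hw]
      simp [h2]
  -- T₂
  · refine ⟨X * derivative ((X ^ 2 - 1) * g) - 2 * ((X ^ 2 - 1) * g) - 4 * g, ?_, ?_⟩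
    · rw [mem_SGKM_iff hn]
      refine ⟨?_, ?_, ?_⟩
      · rcases hgdeg with hm | rfl
        · have hmg : ((X ^ 2 - 1 : Polynomial ℝ) * g).natDegree ≤ 2 + g.natDegree :=
            natDegree_mul_le.trans (by rw [X_sq_sub_one_natDegree])
          have hdmg := natDegree_derivative_le ((X ^ 2 - 1 : Polynomial ℝ) * g)
          refine (natDegree_sub_le _ _).trans
            (max_le ((natDegree_sub_le _ _).trans (max_le ?_ ?_)) ?_)
          · exact natDegree_mul_le.trans (by simp only [natDegree_X]; omega)
          · exact natDegree_mul_le.trans (by simp only [natDegree_ofNat]; omega)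
          · exact natDegree_mul_le.trans (by simp only [natDegree_ofNat]; omega)
        · simp
      · simp only [derivative_sub, derivative_mul, derivative_X_pow, derivative_one,
          derivative_ofNat, derivative_X, map_ofNat, Nat.cast_ofNat]
        simp
        ring
      · simp only [derivative_sub, derivative_mul, derivative_X_pow, derivative_one,
          derivative_ofNat, derivative_X, map_ofNat, Nat.cast_ofNat]
        simp
        ring
    · rw [TR, hg]
      simp only [map_mul, map_sub, map_pow, map_one, map_ofNat, RatFunc.algebraMap_X,
        zero_mul, add_zero]
      field_simp
      ring
  -- T₁
  · refine ⟨derivative ((X ^ 2 - 1) * g) + X * ((X ^ 2 - 1) * g) - 4 * (X * g), ?_, ?_⟩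
    · rw [mem_SGKM_iff hn]
      refine ⟨?_, ?_, ?_⟩
      · rcases hgdeg with hm | rfl
        · have hmg : ((X ^ 2 - 1 : Polynomial ℝ) * g).natDegree ≤ 2 + g.natDegree :=
            natDegree_mul_le.trans (by rw [X_sq_sub_one_natDegree])
          have hdmg := natDegree_derivative_le ((X ^ 2 - 1 : Polynomial ℝ) * g)
          refine (natDegree_sub_le _ _).trans
            (max_le ((natDegree_add_le _ _).trans (max_le ?_ ?_)) ?_)
          · omega
          · exact natDegree_mul_le.trans (by simp only [natDegree_X]; omega)
          · refine natDegree_mul_le.trans ?_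
            have : ((X : Polynomial ℝ) * g).natDegree ≤ 1 + g.natDegree :=
              natDegree_mul_le.trans (by simp only [natDegree_X]; omega)
            simp only [natDegree_ofNat]
            omega
        · simp
      · simp only [derivative_sub, derivative_add, derivative_mul, derivative_X_pow,
          derivative_one, derivative_ofNat, derivative_X, map_ofNat, Nat.cast_ofNat]
        simp
        ring
      · simp only [derivative_sub, derivative_add, derivative_mul, derivative_X_pow,
          derivative_one, derivative_ofNat, derivative_X, map_ofNat, Nat.cast_ofNat]
        simp
        ring
    · rw [TR, hg]
      simp only [map_mul, map_sub, map_add, map_pow, map_one, map_ofNat, RatFunc.algebraMap_X,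
        zero_mul, add_zero, one_mul]
      field_simp
      ring
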